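/- arXiv:0904.0338 — 4 statements merged into one kernel-verified Lean document; each statement's English description precedes it below -/
import Mathlib

section
/- For every s ∈ Ω, the set {P ∈ Δ(Ω) : s ∈ Â_P} is a Borel subset of Δ(Ω) with its weak* topology, where Â_P is the acceptance set of the global category test. -/
open MeasureTheory Set
open scoped ENNReal

/-- The space of paths `Ω = {0,1}^ℕ`. -/
abbrev Omega : Type := ℕ → Bool

/-- The cylinder of all extensions of the first `t` coordinates of `s`. -/
def cyl (s : Omega) (t : ℕ) : Set Omega := {x | ∀ i < t, x i = s i}

/-- `t` is the least natural number with `P (C(sᵢ|t) \ {sᵢ}) ≤ b`. -/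
def IsLeastCut (P : Measure Omega) (si : Omega) (b : ℝ≥0∞) (t : ℕ) : Prop :=
  P (cyl si t \ {si}) ≤ b ∧ ∀ u < t, ¬ P (cyl si u \ {si}) ≤ b

/-- The acceptance set `Â_P = ⋃ k (Ω \ ⋃ i C(sⁱ|t(i,k))) ∪ S` of the global category test. -/
def Ahat (S : ℕ → Omega) (t : ℕ → ℕ → ℕ) : Set Omega :=
  (⋃ k, (⋃ i, cyl (S i) (t i k))ᶜ) ∪ Set.range S

lemma cyl_closed (s : Omega) (u : ℕ) : IsClosed (cyl s u) := by
  have : cyl s u = ⋂ i ∈ Finset.range u, {x : Omega | x i = s i} := by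
    ext x; simp [cyl]
  rw [this]
  exact isClosed_biInter fun i _ => isClosed_eq (continuous_apply i) continuous_const

lemma cyl_open (s : Omega) (u : ℕ) : IsOpen (cyl s u) := by
  have : cyl s u = ⋂ i ∈ Finset.range u, (fun x : Omega => x i) ⁻¹' {s i} := by
    ext x; simp [cyl]
  rw [this]
  exact isOpen_biInter_finset fun i _ => (continuous_apply i).isOpen_preimage _ (isOpen_discrete _)

lemma closed_le_set (b : ℝ≥0∞) (F : Set Omega) (hF : IsClosed F) :
    IsClosed {P : ProbabilityMeasure Omega | (1 : ℝ≥0∞) ≤ b + P.toMeasure F} := by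
  rw [← isOpen_compl_iff]
  rw [isOpen_iff_mem_nhds]
  intro P hP
  simp only [mem_compl_iff, mem_setOf_eq, not_le] at hP
  have hb1 : b < 1 := lt_of_le_of_lt le_self_add hP
  have hb : b ≠ ∞ := (hb1.trans ENNReal.one_lt_top).ne
  have hPF : P.toMeasure F < 1 - b := (ENNReal.cancel_of_ne hb).lt_tsub_iff_left.mpr hP
  have hlim : (Filter.limsup (fun Q : ProbabilityMeasure Omega => Q.toMeasure F) (nhds P))
      ≤ P.toMeasure F :=
    ProbabilityMeasure.limsup_measure_closed_le_of_tendsto (μs := id) Filter.tendsto_id hF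
  have hev := Filter.eventually_lt_of_limsup_lt (lt_of_le_of_lt hlim hPF)
  filter_upwards [hev] with Q hQ
  simp only [mem_compl_iff, mem_setOf_eq, not_le]
  calc b + Q.toMeasure F < b + (1 - b) := ENNReal.add_lt_add_left hb hQ
    _ = 1 := by rw [add_tsub_cancel_of_le hb1.le]

lemma measurable_le_set (b : ℝ≥0∞) (si : Omega) (u : ℕ) :
    letI : MeasurableSpace (ProbabilityMeasure Omega) := borel _
    MeasurableSet {P : ProbabilityMeasure Omega | P.toMeasure (cyl si u \ {si}) ≤ b} := by
  letI : MeasurableSpace (ProbabilityMeasure Omega) := borel _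
  haveI : BorelSpace (ProbabilityMeasure Omega) := ⟨rfl⟩
  have hDm : MeasurableSet (cyl si u \ {si}) :=
    ((cyl_closed si u).measurableSet).diff (measurableSet_singleton si)
  have key : {P : ProbabilityMeasure Omega | P.toMeasure (cyl si u \ {si}) ≤ b}
      = {P : ProbabilityMeasure Omega | (1 : ℝ≥0∞) ≤ b + P.toMeasure (cyl si u \ {si})ᶜ} := by
    ext P
    have hsum : P.toMeasure (cyl si u \ {si}) + P.toMeasure (cyl si u \ {si})ᶜ = 1 := by
      rw [measure_add_measure_compl hDm]; exact measure_univ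
    simp only [mem_setOf_eq]
    constructor
    · intro h
      calc (1:ℝ≥0∞) = P.toMeasure (cyl si u \ {si}) + P.toMeasure (cyl si u \ {si})ᶜ := hsum.symm
        _ ≤ b + P.toMeasure (cyl si u \ {si})ᶜ := add_le_add h le_rfl
    · intro h
      have := hsum ▸ h
      exact ENNReal.le_of_add_le_add_right (measure_ne_top _ _) this
  rw [key]
  have hFc : IsClosed (cyl si u \ {si})ᶜ := by
    rw [diff_eq, compl_inter, compl_compl]
    exact IsClosed.union (cyl_open si u).isClosed_compl isClosed_singleton
  exact (closed_le_set b _ hFc).measurableSet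

lemma measurable_t (b : ℝ≥0∞) (si : Omega) (t0 : ProbabilityMeasure Omega → ℕ)
    (ht : ∀ P, IsLeastCut P.toMeasure si b (t0 P)) :
    letI : MeasurableSpace (ProbabilityMeasure Omega) := borel _
    Measurable t0 := by
  letI : MeasurableSpace (ProbabilityMeasure Omega) := borel _
  apply measurable_to_countable'
  intro m
  have key : {P : ProbabilityMeasure Omega | t0 P = m}
      = {P : ProbabilityMeasure Omega | P.toMeasure (cyl si m \ {si}) ≤ b}
        ∩ ⋂ u ∈ Finset.range m,
            {P : ProbabilityMeasure Omega | P.toMeasure (cyl si u \ {si}) ≤ b}ᶜ := by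
    ext P
    simp only [mem_setOf_eq, mem_inter_iff, mem_iInter, Finset.mem_range, mem_compl_iff]
    constructor
    · rintro rfl
      exact ⟨(ht P).1, fun u hu => (ht P).2 u hu⟩
    · rintro ⟨h1, h2⟩
      rcases lt_trichotomy (t0 P) m with h | h | h
      · exact absurd (ht P).1 (h2 _ h)
      · exact h
      · exact absurd h1 ((ht P).2 m h)
  show MeasurableSet {P | t0 P = m}
  rw [key]
  exact (measurable_le_set b si m).inter
    (MeasurableSet.biInter (Set.to_countable _)
      (fun u _ => (measurable_le_set b si u).compl))

/-- For every path `s`, the set `{P ∈ Δ(Ω) : s ∈ Â_P}` is a Borel subset of `Δ(Ω)` with its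
weak* topology. -/
theorem stmt5 (S : ℕ → Omega) (hS : DenseRange S)
    (t : ProbabilityMeasure Omega → ℕ → ℕ → ℕ)
    (ht : ∀ (P : ProbabilityMeasure Omega) (i k : ℕ),
      IsLeastCut P.toMeasure (S i) ((2 : ℝ≥0∞)⁻¹ ^ (k + i)) (t P i k))
    (s : Omega) :
    @MeasurableSet (ProbabilityMeasure Omega) (borel (ProbabilityMeasure Omega))
      {P : ProbabilityMeasure Omega | s ∈ Ahat S (t P)} := by
  letI : MeasurableSpace (ProbabilityMeasure Omega) := borel _
  show MeasurableSet {P : ProbabilityMeasure Omega | s ∈ Ahat S (t P)}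
  by_cases hs : s ∈ Set.range S
  · have : {P : ProbabilityMeasure Omega | s ∈ Ahat S (t P)} = Set.univ :=
      eq_univ_of_forall fun P => Or.inr hs
    rw [this]; exact MeasurableSet.univ
  · have key : {P : ProbabilityMeasure Omega | s ∈ Ahat S (t P)}
        = ⋃ k, ⋂ i, (fun P => t P i k) ⁻¹' {m : ℕ | s ∉ cyl (S i) m} := by
      ext P
      simp only [Ahat, mem_setOf_eq, mem_union, mem_iUnion, mem_iInter, mem_compl_iff,
        mem_preimage, hs, or_false, not_exists]
    rw [key]
    exact MeasurableSet.iUnion fun k => MeasurableSet.iInter fun i =>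
      (measurable_t _ (S i) (fun P => t P i k) (fun P => ht P i k))
        ((Set.to_countable _).measurableSet)
end

section
/- The global category test cannot be manipulated: for every Borel probability measure ζ on Δ(Ω), the set of paths s such that ζ({P : s ∈ Â_P}) = 0 (the revelation set R^0_ζ) is the complement of a first category subset of Ω. -/
open MeasureTheory Set Filter Topology
open scoped ENNReal

lemma cyl_isOpen (s : Omega) (t : ℕ) : IsOpen (cyl s t) := by
  have h : cyl s t = ⋂ i ∈ Finset.range t, (fun x : Omega => x i) ⁻¹' {s i} := by
    ext x; simp [cyl, Finset.mem_range]
  rw [h]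
  exact isOpen_biInter_finset fun i _ =>
    (continuous_apply i).isOpen_preimage _ (isOpen_discrete _)

lemma cyl_antitone (s : Omega) {a b : ℕ} (h : a ≤ b) : cyl s b ⊆ cyl s a :=
  fun x hx i hi => hx i (lt_of_lt_of_le hi h)

lemma mem_cyl_self (s : Omega) (t : ℕ) : s ∈ cyl s t := fun _ _ => rfl

lemma dense_compl_singleton_omega (x : Omega) : Dense ({x}ᶜ : Set Omega) := by
  rw [dense_iff_inter_open]
  intro U hU hne
  by_cases hx : x ∈ U
  · obtain ⟨I, u, hI, hsub⟩ := isOpen_pi_iff.mp hU x hx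
    set N := (I.sup id) + 1 with hN
    set y : Omega := fun j => if j ∈ I then x j else !(x j) with hy
    have hNI : N ∉ I := by
      intro h
      have := Finset.le_sup (f := id) h
      simp only [id] at this
      omega
    refine ⟨y, hsub ?_, ?_⟩
    · intro j hj
      simp only [hy, Finset.mem_coe.mp hj, if_pos]
      exact (hI j hj).2
    · simp only [mem_compl_iff, mem_singleton_iff]
      intro h
      have : y N = x N := congrFun h N
      simp only [hy, hNI, if_neg, if_false] at this
      exact Bool.not_ne_self _ this
  · obtain ⟨z, hz⟩ := hne
    exact ⟨z, hz, fun h => hx ((mem_singleton_iff.mp h) ▸ hz)⟩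

lemma isMeagre_Ahat (S : ℕ → Omega) (hS : DenseRange S) (τ : ℕ → ℕ → ℕ) :
    IsMeagre (Ahat S τ) := by
  have h1 : IsMeagre (⋃ k, (⋃ i, cyl (S i) (τ i k))ᶜ) := by
    apply isMeagre_iUnion
    intro k
    have hopen : IsOpen (⋃ i, cyl (S i) (τ i k)) := isOpen_iUnion fun i => cyl_isOpen _ _
    have hsub : Set.range S ⊆ ⋃ i, cyl (S i) (τ i k) := by
      rintro x ⟨i, rfl⟩
      exact mem_iUnion.mpr ⟨i, mem_cyl_self _ _⟩
    have hdense : Dense (⋃ i, cyl (S i) (τ i k)) := hS.mono hsub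
    rw [IsMeagre, compl_compl]
    exact residual_of_dense_open hopen hdense
  have h2 : IsMeagre (Set.range S) := by
    rw [Set.range_eq_iUnion]
    apply isMeagre_iUnion
    intro i
    rw [IsMeagre]
    exact residual_of_dense_open isOpen_compl_singleton (dense_compl_singleton_omega _)
  rw [Ahat, IsMeagre, compl_union]
  exact Filter.inter_mem h1 h2

/-- For a closed set `F`, the set of probability measures giving `F` mass at least `c`
is closed in the topology of weak convergence. -/
lemma isClosed_le_meas {F : Set Omega} (hF : IsClosed F) (c : ℝ≥0∞) :
    IsClosed {P : ProbabilityMeasure Omega | c ≤ P.toMeasure F} := by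
  rw [← isOpen_compl_iff, isOpen_iff_mem_nhds]
  intro P hP
  simp only [mem_compl_iff, mem_setOf_eq, not_le] at hP
  have hlim : Filter.limsup (fun Q : ProbabilityMeasure Omega => Q.toMeasure F) (𝓝 P)
      ≤ P.toMeasure F :=
    ProbabilityMeasure.limsup_measure_closed_le_of_tendsto (L := 𝓝 P)
      (μs := id) Filter.tendsto_id hF
  have hev := Filter.eventually_lt_of_limsup_lt (lt_of_le_of_lt hlim hP)
  filter_upwards [hev] with Q hQ
  simp only [mem_compl_iff, mem_setOf_eq, not_le]
  exact hQ

/-- The global category test cannot be manipulated: for every Borel probability measure `ζ`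
on `Δ(Ω)`, the revelation set `{s : ζ({P : s ∈ Â_P}) = 0}` is the complement of a first
category subset of `Ω`. -/
theorem stmt6 (S : ℕ → Omega) (hS : DenseRange S)
    (t : ProbabilityMeasure Omega → ℕ → ℕ → ℕ)
    (ht : ∀ (P : ProbabilityMeasure Omega) (i k : ℕ),
      IsLeastCut P.toMeasure (S i) ((2 : ℝ≥0∞)⁻¹ ^ (k + i)) (t P i k))
    (ζ : @Measure (ProbabilityMeasure Omega) (borel (ProbabilityMeasure Omega)))
    (hζ : @IsProbabilityMeasure _ (borel (ProbabilityMeasure Omega)) ζ) :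
    IsMeagre {s : Omega | ζ {P : ProbabilityMeasure Omega | s ∈ Ahat S (t P)} = 0}ᶜ := by
  letI : MeasurableSpace (ProbabilityMeasure Omega) := borel (ProbabilityMeasure Omega)
  haveI : BorelSpace (ProbabilityMeasure Omega) := ⟨rfl⟩
  haveI := hζ
  -- the sets {P | t P i k ≤ n} are closed
  have hEclosed : ∀ i k n : ℕ, IsClosed {P : ProbabilityMeasure Omega | t P i k ≤ n} := by
    intro i k n
    set b : ℝ≥0∞ := (2 : ℝ≥0∞)⁻¹ ^ (k + i) with hb
    have hb1 : b ≤ 1 := pow_le_one' (by simp [ENNReal.inv_le_one]) _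
    set A : Set Omega := cyl (S i) n \ {S i} with hA
    have hAopen : IsOpen A := (cyl_isOpen _ _).sdiff isClosed_singleton
    have hAmeas : MeasurableSet A := hAopen.measurableSet
    have hEq : {P : ProbabilityMeasure Omega | t P i k ≤ n}
        = {P : ProbabilityMeasure Omega | 1 - b ≤ P.toMeasure Aᶜ} := by
      ext P
      have hcompl : P.toMeasure Aᶜ = 1 - P.toMeasure A := by
        rw [measure_compl hAmeas (measure_ne_top _ _), measure_univ]
      have hPA1 : P.toMeasure A ≤ 1 := prob_le_one
      simp only [mem_setOf_eq, hcompl]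
      constructor
      · intro h
        have hmono : P.toMeasure A ≤ P.toMeasure (cyl (S i) (t P i k) \ {S i}) :=
          measure_mono (diff_subset_diff_left (cyl_antitone _ h))
        exact tsub_le_tsub_left (hmono.trans (ht P i k).1) 1
      · intro h
        have h2 : 1 - (1 - P.toMeasure A) ≤ 1 - (1 - b) := tsub_le_tsub_left h 1
        rw [ENNReal.sub_sub_cancel ENNReal.one_ne_top hPA1,
          ENNReal.sub_sub_cancel ENNReal.one_ne_top hb1] at h2
        by_contra hn
        push_neg at hn
        exact (ht P i k).2 n hn h2
    rw [hEq]
    exact isClosed_le_meas (isClosed_compl_iff.mpr hAopen) _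
  -- choice of thresholds
  have hchoice : ∀ m i k : ℕ, ∃ n : ℕ,
      ζ {P : ProbabilityMeasure Omega | ¬ t P i k ≤ n}
        < (2 : ℝ≥0∞)⁻¹ ^ m * (2 : ℝ≥0∞)⁻¹ ^ i * (2 : ℝ≥0∞)⁻¹ ^ k := by
    intro m i k
    set D : ℕ → Set (ProbabilityMeasure Omega) :=
      fun n => {P | ¬ t P i k ≤ n} with hD
    have hDmeas : ∀ n, MeasurableSet (D n) := by
      intro n
      exact (hEclosed i k n).measurableSet.compl
    have hDanti : Antitone D := by
      intro a c hac P hP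
      simp only [hD, mem_setOf_eq] at hP ⊢
      exact fun h => hP (h.trans hac)
    have hDempty : ⋂ n, D n = ∅ := by
      ext P
      simp only [mem_iInter, hD, mem_setOf_eq, mem_empty_iff_false, iff_false, not_forall,
        not_not]
      exact ⟨t P i k, le_refl _⟩
    have htend : Filter.Tendsto (fun n => ζ (D n)) Filter.atTop (𝓝 0) := by
      have := tendsto_measure_iInter_atTop (μ := ζ)
        (fun n => (hDmeas n).nullMeasurableSet) hDanti ⟨0, measure_ne_top _ _⟩
      rw [hDempty, measure_empty] at this
      exact this
    have h2ne : ((2 : ℝ≥0∞)⁻¹) ≠ 0 := ENNReal.inv_ne_zero.mpr (by norm_num)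
    have hpos : (0 : ℝ≥0∞) < (2 : ℝ≥0∞)⁻¹ ^ m * (2 : ℝ≥0∞)⁻¹ ^ i * (2 : ℝ≥0∞)⁻¹ ^ k :=
      ENNReal.mul_pos (mul_ne_zero (pow_ne_zero _ h2ne) (pow_ne_zero _ h2ne)) (pow_ne_zero _ h2ne)
    exact (htend.eventually_lt_const hpos).exists
  choose T hT using hchoice
  -- the meagre set
  have hmeagre : IsMeagre (⋃ m, Ahat S (T m)) :=
    isMeagre_iUnion fun m => isMeagre_Ahat S hS (T m)
  apply hmeagre.mono
  rw [compl_subset_comm]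
  intro s hs
  simp only [mem_compl_iff, mem_iUnion, not_exists] at hs
  simp only [mem_compl_iff, mem_setOf_eq, not_not]
  -- bound the measure by 2⁻ᵐ * 4 for every m
  have hbound : ∀ m : ℕ, ζ {P : ProbabilityMeasure Omega | s ∈ Ahat S (t P)}
      ≤ (2 : ℝ≥0∞)⁻¹ ^ m * 4 := by
    intro m
    have hsub : {P : ProbabilityMeasure Omega | s ∈ Ahat S (t P)}
        ⊆ ⋃ i, ⋃ k, {P : ProbabilityMeasure Omega | ¬ t P i k ≤ T m i k} := by
      intro P hP
      by_contra hmem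
      simp only [mem_iUnion, mem_setOf_eq, not_exists, not_not] at hmem
      apply hs m
      -- from s ∈ Ahat S (t P) and t P i k ≤ T m i k deduce s ∈ Ahat S (T m)
      rcases hP with hP | hP
      · left
        obtain ⟨V, ⟨k, rfl⟩, hV⟩ := hP
        refine mem_iUnion.mpr ⟨k, ?_⟩
        intro hcon
        obtain ⟨W, ⟨i, rfl⟩, hW⟩ := hcon
        exact hV ⟨_, ⟨i, rfl⟩, cyl_antitone _ (hmem i k) hW⟩
      · exact Or.inr hP
    calc ζ {P : ProbabilityMeasure Omega | s ∈ Ahat S (t P)}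
        ≤ ζ (⋃ i, ⋃ k, {P : ProbabilityMeasure Omega | ¬ t P i k ≤ T m i k}) :=
          measure_mono hsub
      _ ≤ ∑' i : ℕ, ζ (⋃ k, {P : ProbabilityMeasure Omega | ¬ t P i k ≤ T m i k}) :=
          measure_iUnion_le _
      _ ≤ ∑' i : ℕ, ∑' k : ℕ, ζ {P : ProbabilityMeasure Omega | ¬ t P i k ≤ T m i k} :=
          ENNReal.tsum_le_tsum fun i => measure_iUnion_le _
      _ ≤ ∑' i : ℕ, ∑' k : ℕ, (2 : ℝ≥0∞)⁻¹ ^ m * (2 : ℝ≥0∞)⁻¹ ^ i * (2 : ℝ≥0∞)⁻¹ ^ k :=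
          ENNReal.tsum_le_tsum fun i => ENNReal.tsum_le_tsum fun k => (hT m i k).le
      _ = (2 : ℝ≥0∞)⁻¹ ^ m * 4 := by
          have hgeo : ∑' k : ℕ, (2 : ℝ≥0∞)⁻¹ ^ k = 2 := by
            rw [ENNReal.tsum_geometric, ENNReal.one_sub_inv_two, inv_inv]
          simp_rw [mul_assoc, ENNReal.tsum_mul_left, ENNReal.tsum_mul_right, hgeo]
          norm_num
  -- conclude the measure is zero
  by_contra h0
  have hpos : 0 < ζ {P : ProbabilityMeasure Omega | s ∈ Ahat S (t P)} := pos_iff_ne_zero.mpr h0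
  have htend : Filter.Tendsto (fun m : ℕ => (2 : ℝ≥0∞)⁻¹ ^ m * 4) Filter.atTop (𝓝 0) := by
    have h1 : Filter.Tendsto (fun m : ℕ => (2 : ℝ≥0∞)⁻¹ ^ m) Filter.atTop (𝓝 0) :=
      ENNReal.tendsto_pow_atTop_nhds_zero_of_lt_one (by simp [ENNReal.inv_lt_one] )
    have := ENNReal.Tendsto.mul_const h1 (Or.inr (by norm_num : (4 : ℝ≥0∞) ≠ ⊤))
    simpa using this
  obtain ⟨m, hm⟩ := (htend.eventually_lt_const hpos).exists
  exact absurd (hbound m) (not_le.mpr hm)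
end

section
/- Let S = {s^1, s^2, ...} be a countable dense subset of Ω and Q^S the measure with Q^S({s^i}) = 1/(i(i+1)). If P is a probability measure with P(S) = 0, then for every path s rejected by the global category test T̂_S the ratio Q^S(C(s|t))/P(C(s|t)) is unbounded in t; hence the likelihood test with fixed alternative Q^S rejects P on s. -/
open MeasureTheory Set
open scoped ENNReal

lemma nat_ineq (i : ℕ) : (i + 1) * (i + 2) ≤ 4 * 2 ^ i := by
  induction i with
  | zero => norm_num
  | succ i ih => have := Nat.lt_two_pow_self (n := i); ring_nf; ring_nf at ih; nlinarith

/-- If `Q^S({sⁱ}) = 1/(i(i+1))` (indices shifted to start at `i = 0`) and `P(S) = 0`, then on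
every path `s` rejected by the global category test the likelihood ratios
`Q^S(C(s|n))/P(C(s|n))` are unbounded; hence the likelihood test with fixed alternative `Q^S`
rejects `P` on `s`. -/
theorem stmt12 (S : ℕ → Omega) (hS : DenseRange S) (hinj : Function.Injective S)
    (Q : Measure Omega) [IsProbabilityMeasure Q]
    (hQ : ∀ i : ℕ, Q {S i} = (((i : ℝ≥0∞) + 1) * ((i : ℝ≥0∞) + 2))⁻¹)
    (P : Measure Omega) [IsProbabilityMeasure P] (hP : P (Set.range S) = 0)
    (t : ℕ → ℕ → ℕ)
    (ht : ∀ i k, IsLeastCut P (S i) ((2 : ℝ≥0∞)⁻¹ ^ (k + i)) (t i k))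
    (s : Omega) (hrej : s ∉ Set.range S ∧ ∀ k, ∃ i, s ∈ cyl (S i) (t i k)) :
    (⨆ n, Q (cyl s n) / P (cyl s n)) = ⊤ := by
  obtain ⟨hsS, hcyl⟩ := hrej
  have key : ∀ k : ℕ, ∃ n : ℕ, (2 : ℝ≥0∞) ^ k / 4 ≤ Q (cyl s n) / P (cyl s n) := by
    intro k
    obtain ⟨i, hi⟩ := hcyl k
    refine ⟨t i k, ?_⟩
    have hceq : cyl s (t i k) = cyl (S i) (t i k) := by
      ext x
      constructor <;> intro hx j hj
      · rw [hx j hj]; exact hi j hj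
      · rw [hx j hj, ← hi j hj]
    have hPsi : P {S i} = 0 :=
      measure_mono_null (singleton_subset_iff.2 (Set.mem_range_self i)) hP
    have hPle : P (cyl s (t i k)) ≤ (2 : ℝ≥0∞)⁻¹ ^ (k + i) := by
      rw [hceq]
      have hsub : cyl (S i) (t i k) ⊆ (cyl (S i) (t i k) \ {S i}) ∪ {S i} := by
        intro x hx
        by_cases h : x = S i
        · exact Or.inr h
        · exact Or.inl ⟨hx, h⟩
      calc P (cyl (S i) (t i k)) ≤ P ((cyl (S i) (t i k) \ {S i}) ∪ {S i}) := measure_mono hsub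
        _ ≤ P (cyl (S i) (t i k) \ {S i}) + P {S i} := measure_union_le _ _
        _ = P (cyl (S i) (t i k) \ {S i}) := by rw [hPsi, add_zero]
        _ ≤ (2 : ℝ≥0∞)⁻¹ ^ (k + i) := (ht i k).1
    have hQge : (((i : ℝ≥0∞) + 1) * ((i : ℝ≥0∞) + 2))⁻¹ ≤ Q (cyl s (t i k)) := by
      rw [hceq, ← hQ i]
      exact measure_mono (singleton_subset_iff.2 (fun j hj => rfl))
    refine le_trans ?_ (ENNReal.div_le_div hQge hPle)
    have h4 : ((i : ℝ≥0∞) + 1) * ((i : ℝ≥0∞) + 2) ≤ 4 * 2 ^ i := by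
      have := nat_ineq i
      calc ((i : ℝ≥0∞) + 1) * ((i : ℝ≥0∞) + 2) = ((((i+1)*(i+2) : ℕ)) : ℝ≥0∞) := by push_cast; ring
        _ ≤ (((4 * 2 ^ i : ℕ)) : ℝ≥0∞) := by exact_mod_cast this
        _ = 4 * 2 ^ i := by push_cast; ring
    have h2i : (2:ℝ≥0∞)^i ≠ 0 := by positivity
    calc (2:ℝ≥0∞)^k/4 = (2:ℝ≥0∞)^k * 2^i / (4 * 2^i) :=
          (ENNReal.mul_div_mul_right _ _ h2i (ENNReal.pow_ne_top (by norm_num))).symm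
      _ = 2^(k+i) / (4*2^i) := by rw [pow_add]
      _ ≤ 2^(k+i) / (((i:ℝ≥0∞)+1)*((i:ℝ≥0∞)+2)) := ENNReal.div_le_div le_rfl h4
      _ = (((i:ℝ≥0∞)+1)*((i:ℝ≥0∞)+2))⁻¹ / 2⁻¹^(k+i) := by
            rw [← ENNReal.inv_pow, div_eq_mul_inv, div_eq_mul_inv, inv_inv, mul_comm]
  rw [iSup_eq_top]
  intro b hb
  obtain ⟨m, hm⟩ := ENNReal.exists_nat_gt hb.ne
  obtain ⟨n, hn⟩ := key (4 * m)
  refine ⟨n, lt_of_lt_of_le hm (le_trans ?_ hn)⟩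
  rw [ENNReal.le_div_iff_mul_le (by norm_num) (by norm_num)]
  have h1 : (4 * m : ℕ) ≤ 2 ^ (4 * m) := (Nat.lt_two_pow_self (n := 4 * m)).le
  calc (m : ℝ≥0∞) * 4 = (((4 * m : ℕ)) : ℝ≥0∞) := by push_cast; ring
    _ ≤ (((2 ^ (4 * m) : ℕ)) : ℝ≥0∞) := by exact_mod_cast h1
    _ = 2 ^ (4 * m) := by push_cast; ring
end

section
/- Fan's minimax theorem: Let X be a compact Hausdorff convex subset of a topological vector space and Y a convex subset of a vector space. Let f : X × Y → ℝ be such that f(·, y) is lower semi-continuous and convex for each y ∈ Y, and f(x, ·) is concave for each x ∈ X. Then min_{x∈X} sup_{y∈Y} f(x,y) = sup_{y∈Y} min_{x∈X} f(x,y). -/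
open Set
open scoped ENNReal

lemma fan_sublevel_closed {E : Type*} [TopologicalSpace E] {X : Set E} (hX : IsClosed X)
    {g : E → ℝ} (hg : LowerSemicontinuousOn g X) (c : ℝ) :
    IsClosed {x ∈ X | g x ≤ c} := by
  apply isClosed_of_closure_subset
  intro x hx
  have hxX : x ∈ X := hX.closure_subset (closure_mono (fun y hy => hy.1) hx)
  refine ⟨hxX, ?_⟩
  by_contra hlt
  push_neg at hlt
  have hev : ∀ᶠ y in nhdsWithin x X, c < g y := hg x hxX c hlt
  have hne : (nhdsWithin x {z ∈ X | g z ≤ c}).NeBot :=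
    mem_closure_iff_nhdsWithin_neBot.1 hx
  have hev' : ∀ᶠ y in nhdsWithin x {z ∈ X | g z ≤ c}, c < g y :=
    hev.filter_mono (nhdsWithin_mono x (fun y hy => hy.1))
  have hmem : ∀ᶠ y in nhdsWithin x {z ∈ X | g z ≤ c}, g y ≤ c :=
    eventually_mem_nhdsWithin.mono (fun y hy => hy.2)
  obtain ⟨y, h1, h2⟩ := (hev'.and hmem).exists
  linarith

/-- Two-function separation lemma: if `g`, `h` are convex on a convex set `X` and
`max (g x) (h x) ≥ c` on `X`, then some convex combination `t*g + (1-t)*h ≥ c` on `X`. -/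
lemma fan_two_fun {E : Type*} [AddCommGroup E] [Module ℝ E] {X : Set E}
    (hXconv : Convex ℝ X) (hXne : X.Nonempty) {g h : E → ℝ}
    (hg : ConvexOn ℝ X g) (hh : ConvexOn ℝ X h) {c : ℝ}
    (hc : ∀ x ∈ X, c ≤ max (g x) (h x)) :
    ∃ t : ℝ, 0 ≤ t ∧ t ≤ 1 ∧ ∀ x ∈ X, c ≤ t * g x + (1 - t) * h x := by
  set C : Set (ℝ × ℝ) := {p | ∃ x ∈ X, g x ≤ p.1 ∧ h x ≤ p.2} with hC_def
  set Q : Set (ℝ × ℝ) := Iio c ×ˢ Iio c with hQ_def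
  have hQconv : Convex ℝ Q := (convex_Iio c).prod (convex_Iio c)
  have hQopen : IsOpen Q := isOpen_Iio.prod isOpen_Iio
  have hCconv : Convex ℝ C := by
    rintro p ⟨x₁, hx₁, hg₁, hh₁⟩ q ⟨x₂, hx₂, hg₂, hh₂⟩ a b ha hb hab
    refine ⟨a • x₁ + b • x₂, hXconv hx₁ hx₂ ha hb hab, ?_, ?_⟩
    · have h2 := hg.2 hx₁ hx₂ ha hb hab
      simp only [smul_eq_mul] at h2
      show g (a • x₁ + b • x₂) ≤ (a • p + b • q).1
      simp only [Prod.fst_add, Prod.smul_fst, smul_eq_mul]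
      nlinarith [mul_le_mul_of_nonneg_left hg₁ ha, mul_le_mul_of_nonneg_left hg₂ hb]
    · have h2 := hh.2 hx₁ hx₂ ha hb hab
      simp only [smul_eq_mul] at h2
      show h (a • x₁ + b • x₂) ≤ (a • p + b • q).2
      simp only [Prod.snd_add, Prod.smul_snd, smul_eq_mul]
      nlinarith [mul_le_mul_of_nonneg_left hh₁ ha, mul_le_mul_of_nonneg_left hh₂ hb]
  have hdisj : Disjoint Q C := by
    rw [Set.disjoint_left]
    rintro p ⟨hp1, hp2⟩ ⟨x, hx, hgx, hhx⟩
    have hcx := hc x hx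
    simp only [mem_Iio] at hp1 hp2
    rcases max_cases (g x) (h x) with ⟨he, _⟩ | ⟨he, _⟩ <;> rw [he] at hcx <;> linarith
  obtain ⟨L, u, hQu, hCu⟩ := geometric_hahn_banach_open hQconv hQopen hCconv hdisj
  set a := L (1, 0) with ha_def
  set b := L (0, 1) with hb_def
  have hLp : ∀ p : ℝ × ℝ, L p = p.1 * a + p.2 * b := by
    intro p
    have hp : p = p.1 • ((1 : ℝ), (0 : ℝ)) + p.2 • ((0 : ℝ), (1 : ℝ)) := by
      ext <;> simp
    conv_lhs => rw [hp]
    rw [map_add, map_smul, map_smul, smul_eq_mul, smul_eq_mul]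
  obtain ⟨x₀, hx₀⟩ := hXne
  have hp₀ : (g x₀, h x₀) ∈ C := ⟨x₀, hx₀, le_rfl, le_rfl⟩
  have hu₀ : u ≤ g x₀ * a + h x₀ * b := by
    have := hCu _ hp₀; rwa [hLp] at this
  have ha0 : 0 ≤ a := by
    by_contra hneg
    push_neg at hneg
    set r := (u - (g x₀ * a + h x₀ * b) - 1) / a with hr_def
    have hrpos : 0 < r := div_pos_of_neg_of_neg (by linarith) hneg
    have hmem : (g x₀ + r, h x₀) ∈ C := ⟨x₀, hx₀, by simpa using hrpos.le, le_rfl⟩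
    have h1 := hCu _ hmem
    rw [hLp] at h1
    have h2 : u ≤ (g x₀ + r) * a + h x₀ * b := h1
    have hra : r * a = u - (g x₀ * a + h x₀ * b) - 1 := by
      rw [hr_def, div_mul_cancel₀ _ (ne_of_lt hneg)]
    nlinarith
  have hb0 : 0 ≤ b := by
    by_contra hneg
    push_neg at hneg
    set r := (u - (g x₀ * a + h x₀ * b) - 1) / b with hr_def
    have hrpos : 0 < r := div_pos_of_neg_of_neg (by linarith) hneg
    have hmem : (g x₀, h x₀ + r) ∈ C := ⟨x₀, hx₀, le_rfl, by simpa using hrpos.le⟩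
    have h1 := hCu _ hmem
    rw [hLp] at h1
    have h2 : u ≤ g x₀ * a + (h x₀ + r) * b := h1
    have hrb : r * b = u - (g x₀ * a + h x₀ * b) - 1 := by
      rw [hr_def, div_mul_cancel₀ _ (ne_of_lt hneg)]
    nlinarith
  have habpos : 0 < a + b := by
    rcases lt_or_eq_of_le (by linarith : (0:ℝ) ≤ a + b) with hlt | heq
    · exact hlt
    · exfalso
      have ha' : a = 0 := by linarith
      have hb' : b = 0 := by linarith
      have hq : ((c - 1 : ℝ), (c - 1 : ℝ)) ∈ Q :=
        ⟨show c - 1 < c by linarith, show c - 1 < c by linarith⟩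
      have h1 := hQu _ hq
      rw [hLp] at h1
      have h2 : (c - 1) * a + (c - 1) * b < u := h1
      rw [ha', hb'] at h2 hu₀
      linarith
  have hcu : (a + b) * c ≤ u := by
    by_contra hcon
    push_neg at hcon
    set ε := ((a + b) * c - u) / (2 * (a + b)) with hε_def
    have hεpos : 0 < ε := div_pos (by linarith) (by linarith)
    have hq : ((c - ε : ℝ), (c - ε : ℝ)) ∈ Q :=
      ⟨show c - ε < c by linarith, show c - ε < c by linarith⟩
    have h1 := hQu _ hq
    rw [hLp] at h1
    have h2 : (c - ε) * a + (c - ε) * b < u := h1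
    have hεeq : ε * (2 * (a + b)) = (a + b) * c - u := by
      rw [hε_def, div_mul_cancel₀ _ (by positivity)]
    nlinarith
  refine ⟨a / (a + b), div_nonneg ha0 habpos.le,
    (div_le_one habpos).2 (by linarith), fun x hx => ?_⟩
  have hmem : (g x, h x) ∈ C := ⟨x, hx, le_rfl, le_rfl⟩
  have hux : u ≤ g x * a + h x * b := by
    have := hCu _ hmem; rwa [hLp] at this
  have key : c ≤ (g x * a + h x * b) / (a + b) := by
    rw [le_div_iff₀ habpos]
    linarith
  have heq : a / (a + b) * g x + (1 - a / (a + b)) * h x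
      = (g x * a + h x * b) / (a + b) := by
    field_simp
    ring
  linarith [heq ▸ key]

/-- Finite version of Fan's minimax, by induction on a finite set of `y`'s. -/
lemma fan_finite {E F : Type*}
    [AddCommGroup E] [Module ℝ E] [TopologicalSpace E] [T2Space E]
    [AddCommGroup F] [Module ℝ F]
    (X : Set E) (Y : Set F) (hYconv : Convex ℝ Y)
    (f : E → F → ℝ)
    (hlsc : ∀ y ∈ Y, LowerSemicontinuousOn (fun x => f x y) X)
    (hconv : ∀ y ∈ Y, ConvexOn ℝ X (fun x => f x y))
    (hconc : ∀ x ∈ X, ConcaveOn ℝ Y (f x))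
    (c : ℝ) (s : Finset Y) :
    ∀ X' : Set E, X' ⊆ X → IsCompact X' → Convex ℝ X' → X'.Nonempty →
      (∀ x ∈ X', ∃ y ∈ s, c < f x ↑y) →
      ∃ y ∈ Y, ∀ x ∈ X', c ≤ f x y := by
  classical
  induction s using Finset.induction_on with
  | empty =>
    intro X' _ _ _ hne habs
    obtain ⟨x, hx⟩ := hne
    obtain ⟨y, hy, _⟩ := habs x hx
    simp at hy
  | @insert y₀ s _ IH =>
    intro X' hX'X hX'c hX'conv hX'ne hcov
    set X₀ := {x ∈ X' | f x ↑y₀ ≤ c} with hX₀_def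
    by_cases hX₀ne : X₀.Nonempty
    · have hlsc' : LowerSemicontinuousOn (fun x => f x ↑y₀) X' :=
        (hlsc ↑y₀ y₀.2).mono hX'X
      have hX₀closed : IsClosed X₀ := fan_sublevel_closed hX'c.isClosed hlsc' c
      have hX₀compact : IsCompact X₀ :=
        hX'c.of_isClosed_subset hX₀closed (fun x hx => hx.1)
      have hX₀conv : Convex ℝ X₀ :=
        ((hconv ↑y₀ y₀.2).subset hX'X hX'conv).convex_le c
      have hX₀X : X₀ ⊆ X := fun x hx => hX'X hx.1
      obtain ⟨y', hy'Y, hy'⟩ := IH X₀ hX₀X hX₀compact hX₀conv hX₀ne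
        (fun x hx => by
          obtain ⟨y, hy, hcy⟩ := hcov x hx.1
          rcases Finset.mem_insert.1 hy with rfl | hys
          · exact absurd hx.2 (not_le.2 hcy)
          · exact ⟨y, hys, hcy⟩)
      have hmax : ∀ x ∈ X', c ≤ max (f x y') (f x ↑y₀) := by
        intro x hx
        by_cases hx₀ : x ∈ X₀
        · exact le_max_of_le_left (hy' x hx₀)
        · have : c < f x ↑y₀ := by
            by_contra hle
            exact hx₀ ⟨hx, not_lt.1 hle⟩
          exact le_max_of_le_right this.le
      obtain ⟨t, ht0, ht1, hts⟩ := fan_two_fun hX'conv hX'ne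
        ((hconv y' hy'Y).subset hX'X hX'conv)
        ((hconv ↑y₀ y₀.2).subset hX'X hX'conv) hmax
      refine ⟨t • y' + (1 - t) • ↑y₀,
        hYconv hy'Y y₀.2 ht0 (by linarith) (by ring), fun x hx => ?_⟩
      have hcc := (hconc x (hX'X hx)).2 hy'Y y₀.2 ht0 (by linarith : (0:ℝ) ≤ 1 - t)
        (by ring)
      have hts' := hts x hx
      simp only [smul_eq_mul] at hcc
      linarith
    · refine ⟨↑y₀, y₀.2, fun x hx => ?_⟩
      by_contra hlt
      push_neg at hlt
      exact hX₀ne ⟨x, hx, hlt.le⟩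

/-- Fan's minimax theorem: for `X` a nonempty compact convex subset of a Hausdorff topological
vector space, `Y` a nonempty convex subset of a vector space, and `f : X × Y → ℝ` lower
semi-continuous and convex in `x` and concave in `y`,
`min_{x∈X} sup_{y∈Y} f(x,y) = sup_{y∈Y} min_{x∈X} f(x,y)`. -/
theorem stmt18 {E F : Type*}
    [AddCommGroup E] [Module ℝ E] [TopologicalSpace E] [T2Space E]
    [AddCommGroup F] [Module ℝ F]
    (X : Set E) (hXc : IsCompact X) (hXconv : Convex ℝ X) (hXne : X.Nonempty)
    (Y : Set F) (hYconv : Convex ℝ Y) (hYne : Y.Nonempty)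
    (f : E → F → ℝ)
    (hlsc : ∀ y ∈ Y, LowerSemicontinuousOn (fun x => f x y) X)
    (hconv : ∀ y ∈ Y, ConvexOn ℝ X (fun x => f x y))
    (hconc : ∀ x ∈ X, ConcaveOn ℝ Y (f x)) :
    (⨅ x : X, ⨆ y : Y, ((f x y : ℝ) : EReal)) = ⨆ y : Y, ⨅ x : X, ((f x y : ℝ) : EReal) := by
  refine le_antisymm ?_ (iSup_iInf_le_iInf_iSup fun (y : Y) (x : X) => ((f x y : ℝ) : EReal))
  by_contra hcon
  push_neg at hcon
  obtain ⟨c, hc1, hc2⟩ := EReal.exists_between_coe_real hcon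
  have key : ∀ x ∈ X, ∃ y : Y, c < f x ↑y := by
    intro x hx
    have hlt : (c : EReal) < ⨆ y : Y, ((f x y : ℝ) : EReal) :=
      lt_of_lt_of_le hc2 (iInf_le _ (⟨x, hx⟩ : X))
    obtain ⟨y, hy⟩ := lt_iSup_iff.1 hlt
    exact ⟨y, by exact_mod_cast hy⟩
  have hZ : ∀ y : Y, IsClosed {x ∈ X | f x ↑y ≤ c} := fun y =>
    fan_sublevel_closed hXc.isClosed (hlsc ↑y y.2) c
  have hempty : (X ∩ ⋂ y : Y, {x ∈ X | f x ↑y ≤ c}) = ∅ := by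
    rw [Set.eq_empty_iff_forall_notMem]
    rintro x ⟨hxX, hxI⟩
    obtain ⟨y, hy⟩ := key x hxX
    have := Set.mem_iInter.1 hxI y
    exact absurd this.2 (not_le.2 hy)
  obtain ⟨s, hs⟩ := hXc.elim_finite_subfamily_closed _ hZ hempty
  have hcov : ∀ x ∈ X, ∃ y ∈ s, c < f x ↑y := by
    intro x hx
    by_contra hno
    push_neg at hno
    have hmem : x ∈ X ∩ ⋂ y ∈ s, {x ∈ X | f x ↑y ≤ c} :=
      ⟨hx, Set.mem_iInter₂.2 fun y hy => ⟨hx, hno y hy⟩⟩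
    rw [hs] at hmem
    exact hmem
  obtain ⟨y, hyY, hge⟩ := fan_finite X Y hYconv f hlsc hconv hconc c s
    X subset_rfl hXc hXconv hXne hcov
  have hle : (c : EReal) ≤ ⨆ y : Y, ⨅ x : X, ((f x y : ℝ) : EReal) := by
    refine le_trans ?_ (le_iSup _ (⟨y, hyY⟩ : Y))
    exact le_iInf fun x => by exact_mod_cast hge x x.2
  exact absurd (lt_of_le_of_lt hle hc1) (lt_irrefl _)
end
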